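/- Let $F$ be a valued field of residue characteristic $p > 0$ with rank-1 valuation $v_F$, and let $G \in \mathcal{O}_F[T]$ be monic irreducible of degree $p$ such that $v_F$ extends uniquely to $F(\alpha)$ where $G(\alpha) = 0$ and $v(\alpha) = 0$. If the reduction $\overline{G}$ of $G$ over the residue field is reducible, then $\overline{G} = (T - \overline{\alpha})^p = T^p - \overline{\alpha}^p$ for some element $\overline{\alpha}$ of the residue field; in particular $\overline{G}$ is inseparable. -/

import Mathlib

open scoped NNReal

/-- The reduction `Ḡ` of a polynomial `G` over a valued field, all of whose coefficients lie in
the valuation ring, over the residue field of the valuation. -/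
noncomputable def redPoly {F : Type*} [Field F] (v : Valuation F ℝ≥0) (G : Polynomial F)
    (h : ∀ i, G.coeff i ∈ v.valuationSubring) :
    Polynomial (IsLocalRing.ResidueField v.valuationSubring) :=
  ∑ i ∈ G.support,
    Polynomial.C (IsLocalRing.residue v.valuationSubring ⟨G.coeff i, h i⟩) * Polynomial.X ^ i

section Helpers

lemma nnreal_pow_le_pow {a b : ℝ≥0} {k : ℕ} (hk : k ≠ 0) (h : a ^ k ≤ b ^ k) : a ≤ b :=
  le_of_pow_le_pow_left₀ hk b.2 h

lemma nnreal_rpow_inv_natpow {a : ℝ≥0} {m : ℕ} (hm : m ≠ 0) (k : ℕ) :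
    (a ^ ((m : ℝ)⁻¹)) ^ (m * k) = a ^ k := by
  rw [← NNReal.rpow_natCast (a ^ ((m : ℝ)⁻¹)) (m * k), ← NNReal.rpow_mul,
    ← NNReal.rpow_natCast a k]
  congr 1
  have : (m : ℝ) ≠ 0 := Nat.cast_ne_zero.mpr hm
  push_cast
  field_simp

lemma nnreal_rpow_inv_le {a b : ℝ≥0} {n m : ℕ} (hn : n ≠ 0) (hm : m ≠ 0)
    (h : a ^ n ≤ b ^ m) : a ^ ((m : ℝ)⁻¹) ≤ b ^ ((n : ℝ)⁻¹) := by
  refine nnreal_pow_le_pow (k := m * n) (by positivity) ?_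
  rw [nnreal_rpow_inv_natpow hm n]
  rw [show m * n = n * m by ring, nnreal_rpow_inv_natpow hn m]
  exact h

lemma nnreal_rpow_inv_eq {a b : ℝ≥0} {n m : ℕ} (hn : n ≠ 0) (hm : m ≠ 0)
    (h : a ^ n = b ^ m) : a ^ ((m : ℝ)⁻¹) = b ^ ((n : ℝ)⁻¹) :=
  le_antisymm (nnreal_rpow_inv_le hn hm h.le) (nnreal_rpow_inv_le hm hn h.ge)

/-- In a valuation subring (of a valued field with values in `ℝ≥0`), an element is a unit iff
its valuation is one. -/
lemma val_isUnit_iff {K : Type*} [Field K] (v : Valuation K ℝ≥0) {y : K}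
    (hy : y ∈ v.valuationSubring) : IsUnit (⟨y, hy⟩ : v.valuationSubring) ↔ v y = 1 := by
  constructor
  · rintro ⟨u, hu⟩
    have h2 : ((u : v.valuationSubring) : K) * ((u⁻¹ : v.valuationSubringˣ) : v.valuationSubring) = 1 := by
      rw [← Subring.coe_mul, u.mul_inv]
      rfl
    have h3 : v y * v ((u⁻¹ : v.valuationSubringˣ) : v.valuationSubring) = 1 := by
      have hy' : y = ((u : v.valuationSubring) : K) := by rw [hu]
      rw [hy', ← v.map_mul, h2, v.map_one]
    have hle1 : v y ≤ 1 := hy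
    have hle2 : v ((u⁻¹ : v.valuationSubringˣ) : v.valuationSubring) ≤ 1 :=
      ((u⁻¹ : v.valuationSubringˣ) : v.valuationSubring).2
    refine le_antisymm hle1 ?_
    calc (1 : ℝ≥0) = v y * _ := h3.symm
    _ ≤ v y * 1 := by gcongr
    _ = v y := mul_one _
  · intro h1
    have hy0 : y ≠ 0 := by rintro rfl; simp at h1
    have hyi : y⁻¹ ∈ v.valuationSubring := by
      rw [Valuation.mem_valuationSubring_iff, map_inv₀, h1]; norm_num
    exact IsUnit.of_mul_eq_one (a := (⟨y, hy⟩ : v.valuationSubring)) ⟨y⁻¹, hyi⟩ (Subtype.ext (mul_inv_cancel₀ hy0))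

/-- If a finite sum is zero and all terms are nonzero, two distinct terms have equal valuation. -/
lemma exists_eq_val_of_sum_eq_zero {K Γ : Type*} [Field K] [LinearOrderedCommGroupWithZero Γ]
    (v : Valuation K Γ) {ι : Type*} {s : Finset ι} {f : ι → K} (hs : ∑ i ∈ s, f i = 0)
    (h0 : s.Nonempty) (hne : ∀ i ∈ s, f i ≠ 0) :
    ∃ i ∈ s, ∃ j ∈ s, i ≠ j ∧ v (f i) = v (f j) := by
  classical
  obtain ⟨i₀, hi₀, hmax⟩ := s.exists_max_image (fun i => v (f i)) h0
  by_contra hcon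
  push_neg at hcon
  have hlt : ∀ j ∈ s.erase i₀, v (f j) < v (f i₀) := by
    intro j hj
    have hjs := Finset.mem_of_mem_erase hj
    have hne' := Finset.ne_of_mem_erase hj
    exact lt_of_le_of_ne (hmax j hjs) (fun h => hcon j hjs i₀ hi₀ hne' h)
  have hv0 : v (f i₀) ≠ 0 := v.ne_zero_iff.mpr (hne i₀ hi₀)
  have hrest : v (∑ j ∈ s.erase i₀, f j) < v (f i₀) := v.map_sum_lt hv0 hlt
  have : v (∑ i ∈ s, f i) = v (f i₀) := by
    rw [← Finset.add_sum_erase s f hi₀]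
    exact v.map_add_eq_of_lt_left hrest
  rw [hs, v.map_zero] at this
  exact hv0 this.symm

end Helpers

section Extension

variable {F L : Type*} [Field F] [Field L] [Algebra F L]

lemma cmp_lemma (vF : Valuation F ℝ≥0) (B : ValuationSubring L)
    (hBF : ∀ x : F, algebraMap F L x ∈ B ↔ vF x ≤ 1)
    {a b : F} (hb : b ≠ 0)
    (h : B.valuation (algebraMap F L a) ≤ B.valuation (algebraMap F L b)) : vF a ≤ vF b := by
  obtain ⟨c, hc⟩ := (ValuationSubring.valuation_le_iff _ _ _).mp h
  have hb' : algebraMap F L b ≠ 0 := by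
    simpa using hb
  have hcval : (c : L) = algebraMap F L (a / b) := by
    rw [map_div₀, eq_div_iff hb', hc]
  have hmem : algebraMap F L (a / b) ∈ B := hcval ▸ c.2
  have h1 : vF (a / b) ≤ 1 := (hBF _).mp hmem
  calc vF a = vF (a / b) * vF b := by rw [← vF.map_mul, div_mul_cancel₀ a hb]
  _ ≤ 1 * vF b := by gcongr
  _ = vF b := one_mul _

lemma tors_lemma (B : ValuationSubring L) {z : L} (hz : z ≠ 0) (hint : IsIntegral F z) :
    ∃ nt : ℕ × F, 0 < nt.1 ∧ nt.2 ≠ 0 ∧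
      B.valuation (z ^ nt.1) = B.valuation (algebraMap F L nt.2) := by
  classical
  set f := minpoly F z with hf
  have hf0 : f ≠ 0 := minpoly.ne_zero hint
  have hroot : Polynomial.aeval z f = 0 := minpoly.aeval F z
  have hsum : ∑ i ∈ f.support, algebraMap F L (f.coeff i) * z ^ i = 0 := by
    rw [← hroot]
    conv_rhs => rw [f.as_sum_support]
    rw [map_sum]
    simp [Polynomial.aeval_monomial]
  have hne : ∀ i ∈ f.support, algebraMap F L (f.coeff i) * z ^ i ≠ 0 := by
    intro i hi
    have h1 : f.coeff i ≠ 0 := Polynomial.mem_support_iff.mp hi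
    exact mul_ne_zero (by simpa using h1) (pow_ne_zero _ hz)
  have hnonempty : f.support.Nonempty := by
    rw [Finset.nonempty_iff_ne_empty]
    simpa using hf0
  obtain ⟨i, hi, j, hj, hij, hv⟩ :=
    exists_eq_val_of_sum_eq_zero B.valuation hsum hnonempty hne
  have key : ∀ i j : ℕ, i ∈ f.support → j ∈ f.support → j < i →
      B.valuation (algebraMap F L (f.coeff i) * z ^ i) =
        B.valuation (algebraMap F L (f.coeff j) * z ^ j) →
      ∃ nt : ℕ × F, 0 < nt.1 ∧ nt.2 ≠ 0 ∧
        B.valuation (z ^ nt.1) = B.valuation (algebraMap F L nt.2) := by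
    clear hv hij hi hj i j
    intro i j hi hj hji hv
    have hci : f.coeff i ≠ 0 := Polynomial.mem_support_iff.mp hi
    have hcj : f.coeff j ≠ 0 := Polynomial.mem_support_iff.mp hj
    refine ⟨(i - j, f.coeff j / f.coeff i), Nat.sub_pos_of_lt hji,
      div_ne_zero hcj hci, ?_⟩
    set v := B.valuation with hvdef
    have hzj : v (z ^ j) ≠ 0 := v.ne_zero_iff.mpr (pow_ne_zero _ hz)
    have hci' : v (algebraMap F L (f.coeff i)) ≠ 0 := v.ne_zero_iff.mpr (by simpa using hci)
    have hpow : z ^ i = z ^ (i - j) * z ^ j := by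
      rw [← pow_add, Nat.sub_add_cancel hji.le]
    have e1 : v (algebraMap F L (f.coeff i)) * (v (z ^ (i - j)) * v (z ^ j))
        = v (algebraMap F L (f.coeff j)) * v (z ^ j) := by
      rw [← v.map_mul, ← v.map_mul, ← v.map_mul, ← hpow]
      exact hv
    have e2 : v (algebraMap F L (f.coeff i)) * v (z ^ (i - j))
        = v (algebraMap F L (f.coeff j)) := by
      apply mul_right_cancel₀ hzj
      rw [← mul_assoc] at e1
      exact e1
    show v (z ^ (i - j)) = v (algebraMap F L (f.coeff j / f.coeff i))
    apply mul_right_cancel₀ hci'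
    conv_rhs => rw [← v.map_mul, ← map_mul, div_mul_cancel₀ _ hci]
    rw [mul_comm] at e2
    exact e2
  rcases hij.lt_or_gt with h | h
  · exact key j i hj hi h hv.symm
  · exact key i j hi hj h hv

open Classical in
/-- The candidate extension function. -/
noncomputable def extFun (vF : Valuation F ℝ≥0) (B : ValuationSubring L) (z : L) : ℝ≥0 :=
  if hz : z = 0 then 0
  else if h : ∃ nt : ℕ × F, 0 < nt.1 ∧ nt.2 ≠ 0 ∧
      B.valuation (z ^ nt.1) = B.valuation (algebraMap F L nt.2) then
    vF (Classical.choose h).2 ^ (((Classical.choose h).1 : ℝ)⁻¹)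
  else 0

lemma extFun_spec (vF : Valuation F ℝ≥0) (B : ValuationSubring L)
    (hBF : ∀ x : F, algebraMap F L x ∈ B ↔ vF x ≤ 1)
    {z : L} (hz : z ≠ 0) {n : ℕ} {y : F} (hn : 0 < n) (hy : y ≠ 0)
    (hv : B.valuation (z ^ n) = B.valuation (algebraMap F L y)) :
    extFun vF B z = vF y ^ ((n : ℝ)⁻¹) := by
  have hex : ∃ nt : ℕ × F, 0 < nt.1 ∧ nt.2 ≠ 0 ∧
      B.valuation (z ^ nt.1) = B.valuation (algebraMap F L nt.2) := ⟨(n, y), hn, hy, hv⟩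
  rw [extFun, dif_neg hz, dif_pos hex]
  obtain ⟨hn', hy', hv'⟩ := Classical.choose_spec hex
  set n' := (Classical.choose hex).1
  set y' := (Classical.choose hex).2
  -- show vF y' ^ (n'⁻¹) = vF y ^ (n⁻¹), from vF y' ^ n = vF y ^ n'
  have hvv0 : B.valuation (algebraMap F L y') ^ n = B.valuation (algebraMap F L y) ^ n' := by
    rw [← hv', ← hv, ← B.valuation.map_pow, ← B.valuation.map_pow, ← pow_mul, ← pow_mul,
      mul_comm]
  have hvv : B.valuation (algebraMap F L (y' ^ n)) = B.valuation (algebraMap F L (y ^ n')) := by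
    simp only [map_pow]
    exact hvv0
  have hyp : y ^ n' ≠ 0 := pow_ne_zero _ hy
  have hyp' : y' ^ n ≠ 0 := pow_ne_zero _ hy'
  have h1 : vF (y' ^ n) ≤ vF (y ^ n') := cmp_lemma vF B hBF hyp hvv.le
  have h2 : vF (y ^ n') ≤ vF (y' ^ n) := cmp_lemma vF B hBF hyp' hvv.ge
  have heq : vF y' ^ n = vF y ^ n' := by
    have := le_antisymm h1 h2
    rwa [map_pow, map_pow] at this
  exact nnreal_rpow_inv_eq hn.ne' hn'.ne' heq

lemma extFun_mono (vF : Valuation F ℝ≥0) (B : ValuationSubring L)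
    (hBF : ∀ x : F, algebraMap F L x ∈ B ↔ vF x ≤ 1)
    (hint : ∀ x : L, IsIntegral F x)
    {z₁ z₂ : L} (hz₁ : z₁ ≠ 0) (hz₂ : z₂ ≠ 0)
    (h : B.valuation z₁ ≤ B.valuation z₂) : extFun vF B z₁ ≤ extFun vF B z₂ := by
  obtain ⟨⟨n₁, y₁⟩, hn₁, hy₁, hv₁⟩ := tors_lemma B hz₁ (hint z₁)
  obtain ⟨⟨n₂, y₂⟩, hn₂, hy₂, hv₂⟩ := tors_lemma B hz₂ (hint z₂)
  rw [extFun_spec vF B hBF hz₁ hn₁ hy₁ hv₁, extFun_spec vF B hBF hz₂ hn₂ hy₂ hv₂]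
  -- v(z₁^{n₁ n₂}) ≤ v(z₂^{n₁ n₂}), i.e. v(alg y₁)^{n₂} ≤ v(alg y₂)^{n₁}
  have hp0 : B.valuation (algebraMap F L y₁) ^ n₂ ≤ B.valuation (algebraMap F L y₂) ^ n₁ := by
    rw [← hv₁, ← hv₂, ← map_pow, ← map_pow, ← pow_mul, ← pow_mul, mul_comm n₂ n₁,
      map_pow, map_pow]
    exact pow_le_pow_left' h _
  have hp : B.valuation (algebraMap F L (y₁ ^ n₂)) ≤ B.valuation (algebraMap F L (y₂ ^ n₁)) := by
    simp only [map_pow]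
    exact hp0
  have h1 : vF (y₁ ^ n₂) ≤ vF (y₂ ^ n₁) := cmp_lemma vF B hBF (pow_ne_zero _ hy₂) hp
  rw [map_pow, map_pow] at h1
  exact nnreal_rpow_inv_le hn₂.ne' hn₁.ne' h1

end Extension

section Extension2

variable {F L : Type*} [Field F] [Field L] [Algebra F L]

lemma extFun_zero (vF : Valuation F ℝ≥0) (B : ValuationSubring L) : extFun vF B 0 = 0 := by
  rw [extFun, dif_pos rfl]

lemma nnreal_rpow_aux (a : ℝ≥0) {n m : ℕ} (hn : n ≠ 0) (hm : m ≠ 0) :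
    (a ^ m) ^ ((((n * m) : ℕ) : ℝ))⁻¹ = a ^ ((n : ℝ))⁻¹ := by
  rw [← NNReal.rpow_natCast a m, ← NNReal.rpow_mul]
  congr 1
  have h1 : (n : ℝ) ≠ 0 := Nat.cast_ne_zero.mpr hn
  have h2 : (m : ℝ) ≠ 0 := Nat.cast_ne_zero.mpr hm
  push_cast
  field_simp

/-- The extension of `vF` to `L` associated to a valuation subring `B` of `L` lying over
the valuation subring of `vF`. -/
noncomputable def extVal (vF : Valuation F ℝ≥0) (B : ValuationSubring L)
    (hBF : ∀ x : F, algebraMap F L x ∈ B ↔ vF x ≤ 1)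
    (hint : ∀ x : L, IsIntegral F x) : Valuation L ℝ≥0 where
  toFun := extFun vF B
  map_zero' := extFun_zero vF B
  map_one' := by
    show extFun vF B 1 = 1
    rw [extFun_spec vF B hBF one_ne_zero (n := 1) (y := 1) one_pos one_ne_zero (by simp)]
    simp
  map_mul' := fun z₁ z₂ => by
    show extFun vF B (z₁ * z₂) = extFun vF B z₁ * extFun vF B z₂
    rcases eq_or_ne z₁ 0 with rfl | hz₁
    · rw [zero_mul, extFun_zero, zero_mul]
    rcases eq_or_ne z₂ 0 with rfl | hz₂
    · rw [mul_zero, extFun_zero, mul_zero]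
    obtain ⟨⟨n₁, y₁⟩, hn₁, hy₁, hv₁⟩ := tors_lemma B hz₁ (hint z₁)
    obtain ⟨⟨n₂, y₂⟩, hn₂, hy₂, hv₂⟩ := tors_lemma B hz₂ (hint z₂)
    simp only at hn₁ hy₁ hv₁ hn₂ hy₂ hv₂
    have hv₁' : B.valuation z₁ ^ n₁ = B.valuation (algebraMap F L y₁) := by
      rw [← map_pow]; exact hv₁
    have hv₂' : B.valuation z₂ ^ n₂ = B.valuation (algebraMap F L y₂) := by
      rw [← map_pow]; exact hv₂
    have hkey : B.valuation ((z₁ * z₂) ^ (n₁ * n₂)) =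
        B.valuation (algebraMap F L (y₁ ^ n₂ * y₂ ^ n₁)) := by
      simp only [map_mul, map_pow]
      rw [← hv₁', ← hv₂', ← pow_mul, ← pow_mul, mul_comm n₂ n₁, mul_pow]
    rw [extFun_spec vF B hBF (mul_ne_zero hz₁ hz₂) (Nat.mul_pos hn₁ hn₂)
        (mul_ne_zero (pow_ne_zero _ hy₁) (pow_ne_zero _ hy₂)) hkey,
      extFun_spec vF B hBF hz₁ hn₁ hy₁ hv₁, extFun_spec vF B hBF hz₂ hn₂ hy₂ hv₂]
    rw [map_mul, map_pow, map_pow, NNReal.mul_rpow,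
      nnreal_rpow_aux _ hn₁.ne' hn₂.ne']
    congr 1
    rw [show n₁ * n₂ = n₂ * n₁ by ring, nnreal_rpow_aux _ hn₂.ne' hn₁.ne']
  map_add_le_max' := fun z₁ z₂ => by
    show extFun vF B (z₁ + z₂) ≤ max (extFun vF B z₁) (extFun vF B z₂)
    rcases eq_or_ne (z₁ + z₂) 0 with h12 | h12
    · rw [h12, extFun_zero]; exact zero_le
    rcases eq_or_ne z₁ 0 with rfl | hz₁
    · rw [zero_add]; exact le_max_right _ _
    rcases eq_or_ne z₂ 0 with rfl | hz₂
    · rw [add_zero]; exact le_max_left _ _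
    rcases le_max_iff.mp (B.valuation.map_add z₁ z₂) with h | h
    · exact le_max_of_le_left (extFun_mono vF B hBF hint h12 hz₁ h)
    · exact le_max_of_le_right (extFun_mono vF B hBF hint h12 hz₂ h)

lemma extVal_extends (vF : Valuation F ℝ≥0) (B : ValuationSubring L)
    (hBF : ∀ x : F, algebraMap F L x ∈ B ↔ vF x ≤ 1)
    (hint : ∀ x : L, IsIntegral F x) (x : F) :
    extVal vF B hBF hint (algebraMap F L x) = vF x := by
  rcases eq_or_ne x 0 with rfl | hx
  · show extFun vF B (algebraMap F L 0) = vF 0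
    rw [map_zero, map_zero, extFun_zero]
  · show extFun vF B (algebraMap F L x) = vF x
    rw [extFun_spec vF B hBF (by simpa using hx) (n := 1) (y := x) one_pos hx (by simp)]
    simp

lemma extVal_eq_one (vF : Valuation F ℝ≥0) (B : ValuationSubring L)
    (hBF : ∀ x : F, algebraMap F L x ∈ B ↔ vF x ≤ 1)
    (hint : ∀ x : L, IsIntegral F x) (z : L)
    (h : extVal vF B hBF hint z = 1) : B.valuation z = 1 := by
  rcases eq_or_ne z 0 with rfl | hz
  · rw [map_zero] at h; exact absurd h zero_ne_one
  obtain ⟨⟨n, y⟩, hn, hy, hv⟩ := tors_lemma B hz (hint z)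
  simp only at hn hy hv
  have h' : extFun vF B z = 1 := h
  rw [extFun_spec vF B hBF hz hn hy hv] at h'
  have hy1 : vF y = 1 := by
    have := congrArg (· ^ (n * 1)) h'
    simp only [nnreal_rpow_inv_natpow hn.ne' 1, one_pow, pow_one] at this
    exact this
  have hmem : algebraMap F L y ∈ B := (hBF y).mpr hy1.le
  have hmemi : algebraMap F L y⁻¹ ∈ B := (hBF y⁻¹).mpr (by rw [map_inv₀, hy1]; norm_num)
  have hone : B.valuation (algebraMap F L y) = 1 := by
    have h1 : B.valuation (algebraMap F L y) ≤ 1 :=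
      (ValuationSubring.valuation_le_one_iff _ _).mpr hmem
    have h2 : B.valuation (algebraMap F L y⁻¹) ≤ 1 :=
      (ValuationSubring.valuation_le_one_iff _ _).mpr hmemi
    have h3 : B.valuation (algebraMap F L y) * B.valuation (algebraMap F L y⁻¹) = 1 := by
      rw [← map_mul, ← map_mul, mul_inv_cancel₀ hy, map_one, map_one]
    refine le_antisymm h1 ?_
    calc (1 : B.ValueGroup) = _ * _ := h3.symm
    _ ≤ B.valuation (algebraMap F L y) * 1 := by
        exact mul_le_mul_right h2 _
    _ = B.valuation (algebraMap F L y) := mul_one _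
  have : B.valuation z ^ n = 1 := by
    rw [← map_pow, hv, hone]
  exact (pow_eq_one_iff.mp this).resolve_right hn.ne'

end Extension2

section Factor

lemma pow_of_unique_factor {k : Type*} [Field k] :
    ∀ (n : ℕ) (f q : Polynomial k), f.natDegree = n → f.Monic → q.Monic → Irreducible q →
    (∀ r : Polynomial k, r.Monic → Irreducible r → r ∣ f → r = q) → 0 < f.natDegree →
    ∃ m : ℕ, 0 < m ∧ f = q ^ m := by
  intro n
  induction n using Nat.strong_induction_on with
  | _ n ih =>
    intro f q hdeg hf hq hqirr huniq hpos
    have hfu : ¬ IsUnit f := by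
      intro hu
      rw [Polynomial.isUnit_iff_degree_eq_zero] at hu
      rw [Polynomial.natDegree_eq_zero_iff_degree_le_zero.mpr hu.le] at hpos
      exact lt_irrefl 0 hpos
    obtain ⟨r, hrm, hrirr, hrdvd⟩ := Polynomial.exists_monic_irreducible_factor f hfu
    have hrq : r = q := huniq r hrm hrirr hrdvd
    subst hrq
    obtain ⟨g, hg⟩ := hrdvd
    have hgm : g.Monic := (hrm.of_mul_monic_left (hg ▸ hf))
    have hqd : 0 < r.natDegree := hrm.natDegree_pos.mpr hrirr.ne_one
    have hr0 : r ≠ 0 := hrm.ne_zero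
    have hg0 : g ≠ 0 := hgm.ne_zero
    have hdegsum : f.natDegree = r.natDegree + g.natDegree := by
      rw [hg, Polynomial.natDegree_mul hr0 hg0]
    rcases Nat.eq_zero_or_pos g.natDegree with hg1 | hg1
    · have : g = 1 := Polynomial.eq_one_of_monic_natDegree_zero hgm hg1
      exact ⟨1, one_pos, by rw [hg, this, mul_one, pow_one]⟩
    · obtain ⟨m, hm, hgq⟩ := ih g.natDegree (by omega) g r rfl hgm hq hqirr
        (fun r' h1 h2 h3 => huniq r' h1 h2 (by rw [hg]; exact h3.mul_left r))
        hg1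
      exact ⟨m + 1, Nat.succ_pos m, by rw [hg, hgq, pow_succ, mul_comm]⟩

end Factor

set_option maxHeartbeats 2000000 in
open Polynomial in
theorem stmt6 {F : Type*} [Field F] (p : ℕ) (hp : p.Prime)
    (vF : Valuation F ℝ≥0)
    [CharP (IsLocalRing.ResidueField vF.valuationSubring) p]
    (G : Polynomial F) (hGmonic : G.Monic) (hGirr : Irreducible G) (hGdeg : G.natDegree = p)
    (hcoeff : ∀ i, G.coeff i ∈ vF.valuationSubring)
    (L : Type*) [Field L] [Algebra F L]
    (α : L) (hαgen : Algebra.adjoin F {α} = ⊤) (hαroot : Polynomial.aeval α G = 0)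
    (vL : Valuation L ℝ≥0)
    (hext : ∀ x : F, vL (algebraMap F L x) = vF x)
    (huniq : ∀ u : Valuation L ℝ≥0, (∀ x : F, u (algebraMap F L x) = vF x) → u = vL)
    (hvα : vL α = 1)
    (hred : ¬ Irreducible (redPoly vF G hcoeff)) :
    ∃ a : IsLocalRing.ResidueField vF.valuationSubring,
      redPoly vF G hcoeff = (Polynomial.X - Polynomial.C a) ^ p ∧
      redPoly vF G hcoeff = Polynomial.X ^ p - Polynomial.C (a ^ p) ∧
      ¬ (redPoly vF G hcoeff).Separable := by
  classical
  set 𝒪 := vF.valuationSubring with h𝒪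
  -- the polynomial over the valuation ring
  set G' : Polynomial 𝒪 := ∑ i ∈ G.support, Polynomial.C (⟨G.coeff i, hcoeff i⟩ : 𝒪) *
    Polynomial.X ^ i with hG'def
  have hG'F : G'.map (algebraMap 𝒪 F) = G := by
    rw [hG'def]
    simp only [Polynomial.map_sum, Polynomial.map_mul, Polynomial.map_pow, Polynomial.map_C,
      Polynomial.map_X]
    conv_rhs => rw [G.as_sum_support_C_mul_X_pow]
    rfl
  have hG'red : G'.map (IsLocalRing.residue 𝒪) = redPoly vF G hcoeff := by
    rw [hG'def, redPoly]
    simp only [Polynomial.map_sum, Polynomial.map_mul, Polynomial.map_pow, Polynomial.map_C,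
      Polynomial.map_X]
    rfl
  have hinj : Function.Injective (algebraMap 𝒪 F) := fun a b hab => Subtype.ext hab
  have hG'deg : G'.natDegree = p := by
    rw [← hGdeg, ← hG'F, Polynomial.natDegree_map_eq_of_injective hinj]
  have hG'monic : G'.Monic := Polynomial.monic_of_injective hinj (by rw [hG'F]; exact hGmonic)
  set Gbar := redPoly vF G hcoeff with hGbardef
  have hGbarmonic : Gbar.Monic := by rw [← hG'red]; exact hG'monic.map _
  have hGbardeg : Gbar.natDegree = p := by
    rw [← hG'red, hG'monic.natDegree_map, hG'deg]
  -- L is finite over F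
  have hαint : IsIntegral F α := ⟨G, hGmonic, hαroot⟩
  have hGmin : minpoly F α = G := (minpoly.eq_of_irreducible_of_monic hGirr hαroot hGmonic).symm
  have htop : IntermediateField.adjoin F {α} = ⊤ :=
    IntermediateField.adjoin_eq_top_of_algebra (hS := hαgen)
  haveI hfd1 : FiniteDimensional F (IntermediateField.adjoin F {α}) :=
    IntermediateField.adjoin.finiteDimensional hαint
  haveI hfd : FiniteDimensional F L := by
    haveI h2 : FiniteDimensional F (⊤ : IntermediateField F L) := htop ▸ hfd1
    exact Module.Finite.equiv (IntermediateField.topEquiv (F := F) (E := L)).toLinearEquiv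
  have hint : ∀ x : L, IsIntegral F x := fun x => IsIntegral.of_finite F x
  -- the map on residue fields
  have hmapmem : ∀ x : 𝒪, algebraMap F L x.1 ∈ vL.valuationSubring := fun x => by
    rw [Valuation.mem_valuationSubring_iff, hext]; exact x.2
  let φL : 𝒪 →+* vL.valuationSubring :=
    { toFun := fun x => ⟨algebraMap F L x.1, hmapmem x⟩
      map_one' := by ext; simp
      map_mul' := by intros; ext; simp
      map_zero' := by ext; simp
      map_add' := by intros; ext; simp }
  haveI hφLloc : IsLocalHom φL := by
    constructor
    intro a ha
    have h1 : vL (algebraMap F L a.1) = 1 := (val_isUnit_iff vL (hmapmem a)).mp ha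
    rw [hext] at h1
    exact (val_isUnit_iff vF a.2).mpr h1
  set ρ : IsLocalRing.ResidueField 𝒪 →+* IsLocalRing.ResidueField vL.valuationSubring :=
    IsLocalRing.ResidueField.map φL with hρdef
  have hαmem : α ∈ vL.valuationSubring := by
    rw [Valuation.mem_valuationSubring_iff, hvα]
  set αbar := IsLocalRing.residue vL.valuationSubring (⟨α, hαmem⟩ : vL.valuationSubring)
    with hαbardef
  -- the key claim
  have claimA : ∀ q : Polynomial (IsLocalRing.ResidueField 𝒪), q.Monic → Irreducible q →
      q ∣ Gbar → (q.map ρ).eval αbar = 0 := by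
    intro q hqm hqirr hqdvd
    by_contra hqa
    -- monic lift H of q
    have hlift : q ∈ Polynomial.lifts (IsLocalRing.residue 𝒪) := by
      rw [Polynomial.lifts_iff_coeff_lifts]
      intro n
      obtain ⟨a, ha⟩ := Ideal.Quotient.mk_surjective (q.coeff n)
      exact ⟨a, ha⟩
    obtain ⟨H, hHmap, hHdeg, hHmonic⟩ := Polynomial.lifts_and_degree_eq_and_monic hlift hqm
    -- the prime ideal over the factor q
    set θ : Polynomial 𝒪 →+* Polynomial (IsLocalRing.ResidueField 𝒪) :=
      Polynomial.mapRingHom (IsLocalRing.residue 𝒪) with hθdef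
    haveI hqsp : (Ideal.span {q}).IsPrime :=
      (Ideal.span_singleton_prime hqm.ne_zero).mpr hqirr.prime
    set Q : Ideal (Polynomial 𝒪) := (Ideal.span {q}).comap θ with hQdef
    haveI hQprime : Q.IsPrime := hqsp.comap θ
    -- the evaluation map
    set ψ : Polynomial 𝒪 →+* L :=
      ((Polynomial.aeval α : Polynomial F →ₐ[F] L) :
        Polynomial F →+* L).comp (Polynomial.mapRingHom (algebraMap 𝒪 F)) with hψdef
    have hψeval : ∀ f : Polynomial 𝒪,
        ψ f = Polynomial.aeval α (f.map (algebraMap 𝒪 F)) := fun f => rfl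
    have hψC : ∀ c : 𝒪, ψ (Polynomial.C c) = algebraMap F L c.1 := by
      intro c
      rw [hψeval, Polynomial.map_C, Polynomial.aeval_C]
      rfl
    have hθG' : θ G' = Gbar := hG'red
    have hG'Q : G' ∈ Q := by
      rw [hQdef, Ideal.mem_comap, Ideal.mem_span_singleton, hθG']
      exact hqdvd
    have hHQ : H ∈ Q := by
      rw [hQdef, Ideal.mem_comap, Ideal.mem_span_singleton]
      have : θ H = q := hHmap
      rw [this]
    have hCQ : ∀ c : 𝒪, c ∈ IsLocalRing.maximalIdeal 𝒪 → Polynomial.C c ∈ Q := by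
      intro c hc
      rw [hQdef, Ideal.mem_comap]
      have hc0 : IsLocalRing.residue 𝒪 c = 0 := Ideal.Quotient.eq_zero_iff_mem.mpr hc
      have : θ (Polynomial.C c) = 0 := by
        rw [hθdef, Polynomial.coe_mapRingHom, Polynomial.map_C, hc0, Polynomial.C_0]
      rw [this]
      exact zero_mem _
    -- kernel of ψ is contained in Q
    have hker : ∀ f : Polynomial 𝒪, ψ f = 0 → f ∈ Q := by
      intro f hf
      have hfd : f %ₘ G' + G' * (f /ₘ G') = f := Polynomial.modByMonic_add_div f G'
      have h2 : Polynomial.aeval α ((G' * (f /ₘ G')).map (algebraMap 𝒪 F)) = 0 := by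
        rw [Polynomial.map_mul, map_mul, hG'F, hαroot, zero_mul]
      have hrroot : Polynomial.aeval α ((f %ₘ G').map (algebraMap 𝒪 F)) = 0 := by
        have := congrArg (fun t => Polynomial.aeval α (Polynomial.map (algebraMap 𝒪 F) t)) hfd
        simp only [Polynomial.map_add, map_add] at this
        rw [h2, add_zero] at this
        rw [this, ← hψeval, hf]
      have hrdeg : (f %ₘ G').degree < G'.degree := Polynomial.degree_modByMonic_lt f hG'monic
      have hrF0 : (f %ₘ G').map (algebraMap 𝒪 F) = 0 := by
        by_contra hr0
        have hle := minpoly.degree_le_of_ne_zero F α hr0 hrroot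
        rw [hGmin] at hle
        have hlt : ((f %ₘ G').map (algebraMap 𝒪 F)).degree < G.degree := by
          calc ((f %ₘ G').map (algebraMap 𝒪 F)).degree ≤ (f %ₘ G').degree :=
            Polynomial.degree_map_le
          _ < G'.degree := hrdeg
          _ = G.degree := by rw [← hG'F, Polynomial.degree_map_eq_of_injective hinj]
        exact absurd hle (not_le.mpr hlt)
      have hrz : f %ₘ G' = 0 := by
        rwa [Polynomial.map_eq_zero_iff hinj] at hrF0
      have hfG : f = G' * (f /ₘ G') := by
        conv_lhs => rw [← hfd]
        rw [hrz, zero_add]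
      rw [hfG]
      exact Ideal.mul_mem_right _ _ hG'Q
    -- localize at Q and extend to a valuation subring
    set R := Localization.AtPrime Q with hRdef
    have hunit : ∀ s : Q.primeCompl, IsUnit (ψ s) := by
      intro s
      rw [isUnit_iff_ne_zero]
      intro h0
      exact s.2 (hker s.1 h0)
    set f' : R →+* L := IsLocalization.lift (M := Q.primeCompl) hunit with hf'def
    have hf'eq : ∀ g : Polynomial 𝒪, f' (algebraMap (Polynomial 𝒪) R g) = ψ g :=
      fun g => IsLocalization.lift_eq hunit g
    haveI hRloc : IsLocalRing R := Localization.AtPrime.isLocalRing Q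
    obtain ⟨B, hmem, hloc⟩ := IsLocalRing.exists_factor_valuationRing (R := R) (K := L) f'
    have hmemψ : ∀ g : Polynomial 𝒪, ψ g ∈ B := fun g => by
      have := hmem (algebraMap (Polynomial 𝒪) R g)
      rwa [hf'eq] at this
    have hnon : ∀ g : Polynomial 𝒪, g ∈ Q →
        ¬ IsUnit ((f'.codRestrict B.toSubring hmem) (algebraMap (Polynomial 𝒪) R g)) := by
      intro g hg hu
      have h1 := hloc.map_nonunit _ hu
      have hmax : algebraMap (Polynomial 𝒪) R g ∈ IsLocalRing.maximalIdeal R :=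
        (IsLocalization.AtPrime.to_map_mem_maximal_iff R Q g).mpr hg
      exact (mem_nonunits_iff.mp ((IsLocalRing.mem_maximalIdeal _).mp hmax)) h1
    -- B lies over the valuation subring of vF
    have hBF : ∀ x : F, algebraMap F L x ∈ B ↔ vF x ≤ 1 := by
      intro x
      constructor
      · intro hxB
        by_contra hgt
        push_neg at hgt
        have hx0 : x ≠ 0 := by
          intro h
          rw [h, map_zero] at hgt
          exact (not_le.mpr hgt) zero_le_one
        have hxinv : vF x⁻¹ < 1 := by
          rw [map_inv₀]
          exact inv_lt_one_of_one_lt₀ hgt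
        have hximem : (⟨x⁻¹, le_of_lt hxinv⟩ : 𝒪) ∈ IsLocalRing.maximalIdeal 𝒪 := by
          rw [IsLocalRing.mem_maximalIdeal, mem_nonunits_iff]
          intro hu
          have hu' := (val_isUnit_iff vF (y := x⁻¹) (le_of_lt hxinv)).mp hu
          exact hxinv.ne hu'
        refine hnon _ (hCQ _ hximem) ?_
        rw [isUnit_iff_exists_inv]
        refine ⟨⟨algebraMap F L x, hxB⟩, ?_⟩
        apply Subtype.ext
        show f' (algebraMap (Polynomial 𝒪) R (Polynomial.C ⟨x⁻¹, le_of_lt hxinv⟩)) *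
          algebraMap F L x = 1
        rw [hf'eq, hψC]
        show algebraMap F L x⁻¹ * algebraMap F L x = 1
        rw [← map_mul, inv_mul_cancel₀ hx0, map_one]
      · intro hle
        have := hmemψ (Polynomial.C ⟨x, hle⟩)
        rwa [hψC] at this
    -- the witness element
    set z₀ := ψ H with hz₀def
    have hz₀B : z₀ ∈ B := hmemψ H
    have hz₀non : ¬ IsUnit (⟨z₀, hz₀B⟩ : B) := by
      have he : (⟨z₀, hz₀B⟩ : B) =
          (f'.codRestrict B.toSubring hmem) (algebraMap (Polynomial 𝒪) R H) := by
        apply Subtype.ext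
        show z₀ = f' (algebraMap (Polynomial 𝒪) R H)
        rw [hf'eq]
      rw [he]
      exact hnon H hHQ
    -- z₀ as an element of the valuation ring of vL
    set w₀ : vL.valuationSubring := (H.map φL).eval (⟨α, hαmem⟩ : vL.valuationSubring)
      with hw₀def
    have hz₀L : z₀ = (w₀ : L) := by
      rw [hw₀def, hz₀def, hψeval]
      have hcoe : ((((H.map φL).eval (⟨α, hαmem⟩ : vL.valuationSubring)) :
          vL.valuationSubring) : L) =
          ((H.map φL).map (vL.valuationSubring.subtype)).eval α := by
        conv_rhs => rw [Polynomial.eval_map]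
        exact (Polynomial.eval₂_hom (p := H.map φL) (vL.valuationSubring.subtype)
          (⟨α, hαmem⟩ : vL.valuationSubring)).symm
      rw [hcoe, Polynomial.map_map]
      rw [Polynomial.aeval_def, Polynomial.eval₂_eq_eval_map, Polynomial.map_map]
      congr 1
    have hres : IsLocalRing.residue vL.valuationSubring w₀ = (q.map ρ).eval αbar := by
      rw [hw₀def]
      have h1 : IsLocalRing.residue vL.valuationSubring ((H.map φL).eval
          (⟨α, hαmem⟩ : vL.valuationSubring)) =
          ((H.map φL).map (IsLocalRing.residue vL.valuationSubring)).eval αbar := by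
        rw [hαbardef]
        conv_rhs => rw [Polynomial.eval_map]
        exact (Polynomial.eval₂_hom _ _).symm
      rw [h1, Polynomial.map_map]
      have h2 : (IsLocalRing.residue vL.valuationSubring).comp φL =
          ρ.comp (IsLocalRing.residue 𝒪) := by
        ext x
        exact (IsLocalRing.ResidueField.map_residue φL x).symm
      rw [h2, ← Polynomial.map_map]
      have h3 : H.map (IsLocalRing.residue 𝒪) = q := hHmap
      rw [h3]
    have hresne : IsLocalRing.residue vL.valuationSubring w₀ ≠ 0 := by
      rw [hres]
      exact hqa
    have hw₀unit : IsUnit w₀ := by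
      by_contra hnu
      exact hresne (Ideal.Quotient.eq_zero_iff_mem.mpr
        ((IsLocalRing.mem_maximalIdeal w₀).mpr (mem_nonunits_iff.mpr hnu)))
    have hvLz₀ : vL z₀ = 1 := by
      rw [hz₀L]
      have := (val_isUnit_iff vL w₀.2).mp (by simpa using hw₀unit)
      exact this
    -- the contradiction with uniqueness of the extension
    have hweq := huniq (extVal vF B hBF hint) (extVal_extends vF B hBF hint)
    have hBz₀ : B.valuation z₀ = 1 := by
      refine extVal_eq_one vF B hBF hint z₀ ?_
      rw [hweq]
      exact hvLz₀
    exact hz₀non ((ValuationSubring.valuation_eq_one_iff B ⟨z₀, hz₀B⟩).mpr hBz₀)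
  -- endgame
  have hGbne : ¬ IsUnit Gbar := by
    intro hu
    have := Polynomial.natDegree_eq_zero_of_isUnit hu
    rw [hGbardeg] at this
    exact hp.ne_zero this
  obtain ⟨q, hqm, hqirr, hqdvd⟩ := Polynomial.exists_monic_irreducible_factor Gbar hGbne
  have huniqfac : ∀ r : Polynomial (IsLocalRing.ResidueField 𝒪),
      r.Monic → Irreducible r → r ∣ Gbar → r = q := by
    intro r hrm hrirr hrdvd
    by_contra hne
    have hqroot := claimA q hqm hqirr hqdvd
    have hrroot := claimA r hrm hrirr hrdvd
    have hndvd : ¬ r ∣ q := by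
      intro hdvd
      exact hne (Polynomial.eq_of_monic_of_associated hrm hqm (hrirr.associated_of_dvd hqirr hdvd))
    have hcop : IsCoprime r q := (hrirr.coprime_iff_not_dvd).mpr hndvd
    have hcopm : IsCoprime (r.map ρ) (q.map ρ) := by
      have := hcop.map (Polynomial.mapRingHom ρ)
      simpa using this
    have hd1 : (Polynomial.X - Polynomial.C αbar) ∣ r.map ρ :=
      Polynomial.dvd_iff_isRoot.mpr hrroot
    have hd2 : (Polynomial.X - Polynomial.C αbar) ∣ q.map ρ :=
      Polynomial.dvd_iff_isRoot.mpr hqroot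
    exact Polynomial.not_isUnit_X_sub_C αbar (hcopm.isUnit_of_dvd' hd1 hd2)
  obtain ⟨m, hm, hfq⟩ := pow_of_unique_factor Gbar.natDegree Gbar q rfl hGbarmonic hqm hqirr
    huniqfac (by rw [hGbardeg]; exact hp.pos)
  have hdegmul : p = m * q.natDegree := by
    rw [← hGbardeg, hfq, Polynomial.natDegree_pow]
  have hqdeg1 : q.natDegree = 1 := by
    rcases hp.eq_one_or_self_of_dvd q.natDegree ⟨m, by rw [hdegmul]; ring⟩ with h1 | h1
    · exact h1
    · exfalso
      have hm1 : m = 1 := by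
        have h2 : m * p = 1 * p := by rw [one_mul, ← h1, ← hdegmul]; exact h1.symm
        exact Nat.eq_of_mul_eq_mul_right hp.pos h2
      rw [hm1, pow_one] at hfq
      exact hred (hfq ▸ hqirr)
  have hm' : m = p := by rw [hqdeg1, mul_one] at hdegmul; omega
  have hq1 : q = Polynomial.X + Polynomial.C (q.coeff 0) := hqm.eq_X_add_C hqdeg1
  refine ⟨-q.coeff 0, ?_, ?_, ?_⟩
  · rw [hfq, hm']
    congr 1
    rw [map_neg, sub_neg_eq_add]
    exact hq1
  · have h1 : Gbar = (Polynomial.X - Polynomial.C (-q.coeff 0)) ^ p := by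
      rw [hfq, hm']
      congr 1
      rw [map_neg, sub_neg_eq_add]
      exact hq1
    haveI : Fact p.Prime := Fact.mk hp
    rw [h1, sub_pow_char, ← Polynomial.C_pow]
  · intro hsep
    have h1 : Gbar = (Polynomial.X - Polynomial.C (-q.coeff 0)) ^ p := by
      rw [hfq, hm']
      congr 1
      rw [map_neg, sub_neg_eq_add]
      exact hq1
    haveI : Fact p.Prime := Fact.mk hp
    have h2 : Gbar = Polynomial.X ^ p - Polynomial.C ((-q.coeff 0) ^ p) := by
      rw [h1, sub_pow_char, ← Polynomial.C_pow]
    have hder : Polynomial.derivative Gbar = 0 := by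
      rw [h2, Polynomial.derivative_sub, Polynomial.derivative_C, Polynomial.derivative_X_pow,
        sub_zero, CharP.cast_eq_zero, map_zero, zero_mul]
    rw [Polynomial.separable_def, hder] at hsep
    exact hGbne (isCoprime_zero_right.mp hsep)
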